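/- Let F_q be a finite field of characteristic different from 2 and let a, b ∈ F_q be such that Δ := a² − 4b is a non-square in F_q and Δ = −b (so that a² = 3b and a, b ≠ 0). In the polynomial ring R = F_q[x₁₁, x₁₂, x₂₁, x₂₂], define 𝔭₁ = ⟨x₁₁ + x₂₂ − a, x₁₂ − b·x₂₁ + a·x₂₂ − b, x₂₁² − (a/b)x₂₁x₂₂ + x₂₁ + (1/b)x₂₂² − (a/b)x₂₂ + 1⟩, 𝔭₂ = ⟨x₁₁ + 2x₂₂ − a, x₁₂ + a·x₂₂ − b, x₂₁ − (a/b)x₂₂ + 1, x₂₂² − a·x₂₂ + b⟩, and 𝔭₃ = ⟨x₁₁, x₁₂, x₂₁, x₂₂⟩. Then 𝔭₁, 𝔭₂, and 𝔭₃ are prime ideals of R. -/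

import Mathlib

private theorem prime_of_section {R S : Type*} [CommRing R] [CommRing S] [IsDomain S]
    (I : Ideal R) (α : R →+* S) (hI : ∀ x ∈ I, α x = 0)
    (β : S →+* R ⧸ I) (h : β.comp α = Ideal.Quotient.mk I) : I.IsPrime := by
  rw [← Ideal.Quotient.isDomain_iff_prime]
  have hinj : Function.Injective (Ideal.Quotient.lift I α hI) := by
    intro u v huv
    obtain ⟨r, rfl⟩ := Ideal.Quotient.mk_surjective u
    obtain ⟨r', rfl⟩ := Ideal.Quotient.mk_surjective v
    have h2 := congrArg β huv
    rwa [Ideal.Quotient.lift_mk, Ideal.Quotient.lift_mk, ← RingHom.comp_apply,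
      ← RingHom.comp_apply, h] at h2
  exact Function.Injective.isDomain _ hinj

private theorem p3_prime {F : Type*} [Field F] :
    (Ideal.span {MvPolynomial.X 0, MvPolynomial.X 1, MvPolynomial.X 2, MvPolynomial.X 3} :
      Ideal (MvPolynomial (Fin 4) F)).IsPrime := by
  refine prime_of_section _ (MvPolynomial.eval₂Hom (RingHom.id F) fun _ => 0) ?_
      ((Ideal.Quotient.mk _).comp MvPolynomial.C) ?_
  · intro p hp
    rw [← RingHom.mem_ker]
    refine Ideal.span_le.mpr ?_ hp
    rintro g (rfl | rfl | rfl | rfl) <;> simp [RingHom.mem_ker]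
  · refine MvPolynomial.ringHom_ext (fun r => ?_) (fun i => ?_)
    · simp
    · have hX : (MvPolynomial.X i : MvPolynomial (Fin 4) F) ∈
          Ideal.span {MvPolynomial.X 0, MvPolynomial.X 1, MvPolynomial.X 2,
            (MvPolynomial.X 3 : MvPolynomial (Fin 4) F)} :=
        Ideal.subset_span (by fin_cases i <;> simp)
      simp [Ideal.Quotient.eq_zero_iff_mem.mpr hX]

set_option synthInstance.maxHeartbeats 1000000 in
set_option maxHeartbeats 1600000 in
private theorem p2_prime {F : Type*} [Field F] (a b : F)
    (hns : ¬∃ c : F, c ^ 2 = a ^ 2 - 4 * b)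
    (g₁ g₂ g₃ g₄ : MvPolynomial (Fin 4) F)
    (h₁ : g₁ = MvPolynomial.X 0 + 2 * MvPolynomial.X 3 - MvPolynomial.C a)
    (h₂ : g₂ = MvPolynomial.X 1 + MvPolynomial.C a * MvPolynomial.X 3 - MvPolynomial.C b)
    (h₃ : g₃ = MvPolynomial.X 2 - MvPolynomial.C (a / b) * MvPolynomial.X 3 + 1)
    (h₄ : g₄ = MvPolynomial.X 3 ^ 2 - MvPolynomial.C a * MvPolynomial.X 3 + MvPolynomial.C b) :
    (Ideal.span {g₁, g₂, g₃, g₄}).IsPrime := by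
  set I : Ideal (MvPolynomial (Fin 4) F) := Ideal.span {g₁, g₂, g₃, g₄} with hIdef
  set q2 : Polynomial F := Polynomial.X ^ 2 - Polynomial.C a * Polynomial.X + Polynomial.C b
    with hq2
  have hq2nd : q2.natDegree = 2 := by rw [hq2]; compute_degree!
  have hq2ne : q2 ≠ 0 := fun h => by simp [h] at hq2nd
  have hirr : Irreducible q2 := by
    rw [Polynomial.irreducible_iff_roots_eq_zero_of_degree_le_three (by simp [hq2nd])
      (by simp [hq2nd])]
    by_contra hne
    obtain ⟨r, hr⟩ := Multiset.exists_mem_of_ne_zero hne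
    have hroot : r ^ 2 - a * r + b = 0 := by
      have h := (Polynomial.mem_roots'.mp hr).2
      rw [Polynomial.IsRoot, hq2] at h
      simpa using h
    exact hns ⟨2 * r - a, by linear_combination 4 * hroot⟩
  haveI : IsDomain (AdjoinRoot q2) :=
    AdjoinRoot.isDomain_of_prime (UniqueFactorizationMonoid.irreducible_iff_prime.mp hirr)
  have hθ : AdjoinRoot.root q2 ^ 2 - AdjoinRoot.of q2 a * AdjoinRoot.root q2 +
      AdjoinRoot.of q2 b = 0 := by
    have h := AdjoinRoot.eval₂_root q2
    rw [hq2] at h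
    simpa using h
  have hmem : ∀ g ∈ ({g₁, g₂, g₃, g₄} : Set (MvPolynomial (Fin 4) F)),
      Ideal.Quotient.mk I g = 0 := by
    intro g hgm
    rw [Ideal.Quotient.eq_zero_iff_mem, hIdef]
    exact Ideal.subset_span hgm
  have hm₁ := hmem g₁ (Set.mem_insert _ _)
  have hm₂ := hmem g₂ (Set.mem_insert_of_mem _ (Set.mem_insert _ _))
  have hm₃ := hmem g₃ (Set.mem_insert_of_mem _ (Set.mem_insert_of_mem _ (Set.mem_insert _ _)))
  have hm₄ := hmem g₄ (Set.mem_insert_of_mem _ (Set.mem_insert_of_mem _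
    (Set.mem_insert_of_mem _ rfl)))
  rw [h₁] at hm₁; rw [h₂] at hm₂; rw [h₃] at hm₃; rw [h₄] at hm₄
  simp only [map_add, map_sub, map_mul, map_pow, map_one, map_ofNat] at hm₁ hm₂ hm₃ hm₄
  have hlift : Polynomial.eval₂ ((Ideal.Quotient.mk I).comp MvPolynomial.C)
      (Ideal.Quotient.mk I (MvPolynomial.X 3)) q2 = 0 := by
    rw [hq2]
    simp only [Polynomial.eval₂_add, Polynomial.eval₂_sub, Polynomial.eval₂_mul,
      Polynomial.eval₂_pow, Polynomial.eval₂_X, Polynomial.eval₂_C, RingHom.comp_apply]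
    linear_combination hm₄
  refine prime_of_section _
    (MvPolynomial.eval₂Hom (AdjoinRoot.of q2)
      ![AdjoinRoot.of q2 a - 2 * AdjoinRoot.root q2,
        AdjoinRoot.of q2 b - AdjoinRoot.of q2 a * AdjoinRoot.root q2,
        AdjoinRoot.of q2 (a / b) * AdjoinRoot.root q2 - 1,
        AdjoinRoot.root q2]) ?_
    (AdjoinRoot.lift ((Ideal.Quotient.mk I).comp MvPolynomial.C)
      (Ideal.Quotient.mk I (MvPolynomial.X 3)) hlift) ?_
  · intro p hp
    rw [← RingHom.mem_ker]
    rw [hIdef] at hp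
    refine Ideal.span_le.mpr ?_ hp
    rintro g (rfl | rfl | rfl | rfl)
    · rw [SetLike.mem_coe, RingHom.mem_ker, h₁]
      simp only [map_add, map_sub, map_mul, map_pow, map_one, map_ofNat,
        MvPolynomial.eval₂Hom_X', MvPolynomial.eval₂Hom_C,
        Matrix.cons_val_zero, Matrix.cons_val_one, Matrix.head_cons, Matrix.cons_val_two,
        Matrix.tail_cons, Matrix.cons_val_three]
      ring
    · rw [SetLike.mem_coe, RingHom.mem_ker, h₂]
      simp only [map_add, map_sub, map_mul, map_pow, map_one, map_ofNat,
        MvPolynomial.eval₂Hom_X', MvPolynomial.eval₂Hom_C,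
        Matrix.cons_val_zero, Matrix.cons_val_one, Matrix.head_cons, Matrix.cons_val_two,
        Matrix.tail_cons, Matrix.cons_val_three]
      ring
    · rw [SetLike.mem_coe, RingHom.mem_ker, h₃]
      simp only [map_add, map_sub, map_mul, map_pow, map_one, map_ofNat,
        MvPolynomial.eval₂Hom_X', MvPolynomial.eval₂Hom_C,
        Matrix.cons_val_zero, Matrix.cons_val_one, Matrix.head_cons, Matrix.cons_val_two,
        Matrix.tail_cons, Matrix.cons_val_three]
      ring
    · rw [SetLike.mem_coe, RingHom.mem_ker, h₄]
      simp only [map_add, map_sub, map_mul, map_pow, map_one, map_ofNat,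
        MvPolynomial.eval₂Hom_X', MvPolynomial.eval₂Hom_C,
        Matrix.cons_val_zero, Matrix.cons_val_one, Matrix.head_cons, Matrix.cons_val_two,
        Matrix.tail_cons, Matrix.cons_val_three]
      linear_combination hθ
  · refine MvPolynomial.ringHom_ext (fun r => ?_) (fun i => ?_)
    · simp [AdjoinRoot.lift_of]
    · have hall : ∀ j : Fin 4, j = 0 ∨ j = 1 ∨ j = 2 ∨ j = 3 := by decide
      rcases hall i with rfl | rfl | rfl | rfl <;>
        simp only [RingHom.comp_apply, MvPolynomial.eval₂Hom_X', Matrix.cons_val_zero,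
          Matrix.cons_val_one, Matrix.head_cons, Matrix.cons_val_two, Matrix.tail_cons,
          Matrix.cons_val_three, map_sub, map_mul, map_ofNat, map_one,
          AdjoinRoot.lift_of, AdjoinRoot.lift_root, Fin.isValue]
      · linear_combination -hm₁
      · linear_combination -hm₂
      · linear_combination -hm₃

set_option synthInstance.maxHeartbeats 1000000 in
set_option maxHeartbeats 1600000 in
private theorem p1_prime {F : Type*} [Field F] (a b : F) (hb : b ≠ 0)
    (hns : ¬∃ c : F, c ^ 2 = a ^ 2 - 4 * b) (hΔ : a ^ 2 - 4 * b = -b)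
    (g₁ g₂ g₃ : MvPolynomial (Fin 4) F)
    (h₁ : g₁ = MvPolynomial.X 0 + MvPolynomial.X 3 - MvPolynomial.C a)
    (h₂ : g₂ = MvPolynomial.X 1 - MvPolynomial.C b * MvPolynomial.X 2 +
      MvPolynomial.C a * MvPolynomial.X 3 - MvPolynomial.C b)
    (h₃ : g₃ = MvPolynomial.X 2 ^ 2 -
      MvPolynomial.C (a / b) * MvPolynomial.X 2 * MvPolynomial.X 3 + MvPolynomial.X 2 +
      MvPolynomial.C (1 / b) * MvPolynomial.X 3 ^ 2 - MvPolynomial.C (a / b) * MvPolynomial.X 3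
      + 1) :
    (Ideal.span {g₁, g₂, g₃}).IsPrime := by
  set I : Ideal (MvPolynomial (Fin 4) F) := Ideal.span {g₁, g₂, g₃} with hIdef
  set p1c : Polynomial F := 1 - Polynomial.C (a / b) * Polynomial.X with hp1c
  set p0c : Polynomial F :=
    Polynomial.C (1 / b) * Polynomial.X ^ 2 - Polynomial.C (a / b) * Polynomial.X + 1 with hp0c
  set q : Polynomial (Polynomial F) :=
    Polynomial.X ^ 2 + Polynomial.C p1c * Polynomial.X + Polynomial.C p0c with hq
  have hmq : q.Monic := by
    rw [hq, add_assoc]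
    refine Polynomial.monic_X_pow_add ?_
    have hle : (Polynomial.C p1c * Polynomial.X + Polynomial.C p0c).degree ≤ 1 := by
      compute_degree
    exact lt_of_le_of_lt hle (by norm_num)
  have hqnd : q.natDegree = 2 := by rw [hq]; compute_degree!
  -- Irreducibility of q via Gauss lemma
  have hirr : Irreducible q := by
    rw [hmq.irreducible_iff_irreducible_map_fraction_map
      (K := FractionRing (Polynomial F))]
    set κ := algebraMap (Polynomial F) (FractionRing (Polynomial F)) with hκ
    have hnm : (q.map κ).natDegree = 2 := by rw [hmq.natDegree_map, hqnd]
    rw [Polynomial.irreducible_iff_roots_eq_zero_of_degree_le_three (by simp [hnm])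
      (by simp [hnm])]
    by_contra hne
    obtain ⟨r, hr⟩ := Multiset.exists_mem_of_ne_zero hne
    have hroot : r ^ 2 + κ p1c * r + κ p0c = 0 := by
      have h := (Polynomial.mem_roots'.mp hr).2
      rw [Polynomial.IsRoot, Polynomial.eval_map, hq] at h
      simpa using h
    obtain ⟨n, d, hd, hnd⟩ := IsFractionRing.div_surjective (A := Polynomial F)
      (2 * r + κ p1c)
    have hd0 : d ≠ 0 := nonZeroDivisors.ne_zero hd
    have hκd : κ d ≠ 0 := fun h0 =>
      hd0 (IsFractionRing.injective (Polynomial F) (FractionRing (Polynomial F))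
        (by rw [h0, map_zero]))
    rw [div_eq_iff hκd] at hnd
    have h2 : κ (n ^ 2) = κ ((p1c ^ 2 - 4 * p0c) * d ^ 2) := by
      simp only [map_mul, map_pow, map_sub, map_ofNat]
      linear_combination (κ n + (2 * r + κ p1c) * κ d) * hnd + (4 * κ d ^ 2) * hroot
    have hn2 : n ^ 2 = (p1c ^ 2 - 4 * p0c) * d ^ 2 :=
      IsFractionRing.injective (Polynomial F) (FractionRing (Polynomial F)) h2
    have hc : ((a / b) ^ 2 - 4 * (1 / b) : F) = -(1 / b) := by
      field_simp
      linear_combination hΔ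
    have hD : p1c ^ 2 - 4 * p0c = Polynomial.C (-(1 / b)) * Polynomial.X ^ 2 +
        Polynomial.C (2 * (a / b)) * Polynomial.X + Polynomial.C (-(3 : F)) := by
      rw [← hc, hp1c, hp0c]
      simp only [map_sub, map_mul, map_pow, map_ofNat, map_one, map_neg]
      ring
    have hlcD : (p1c ^ 2 - 4 * p0c).leadingCoeff = -(1 / b) := by
      rw [hD]
      exact Polynomial.leadingCoeff_quadratic (neg_ne_zero.mpr (one_div_ne_zero hb))
    have hlc : n.leadingCoeff ^ 2 = -(1 / b) * d.leadingCoeff ^ 2 := by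
      have h3 := congrArg Polynomial.leadingCoeff hn2
      rwa [Polynomial.leadingCoeff_pow, Polynomial.leadingCoeff_mul,
        Polynomial.leadingCoeff_pow, hlcD] at h3
    have hdlc : d.leadingCoeff ≠ 0 := Polynomial.leadingCoeff_ne_zero.mpr hd0
    refine hns ⟨b * n.leadingCoeff / d.leadingCoeff, ?_⟩
    rw [hΔ]
    field_simp at hlc ⊢
    linear_combination hlc
  haveI : IsDomain (AdjoinRoot q) :=
    AdjoinRoot.isDomain_of_prime (UniqueFactorizationMonoid.irreducible_iff_prime.mp hirr)
  have hθ : AdjoinRoot.root q ^ 2 + AdjoinRoot.of q p1c * AdjoinRoot.root q +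
      AdjoinRoot.of q p0c = 0 := by
    have h := AdjoinRoot.eval₂_root q
    rw [hq] at h
    simp only [Polynomial.eval₂_add, Polynomial.eval₂_mul, Polynomial.eval₂_pow,
      Polynomial.eval₂_X, Polynomial.eval₂_C] at h
    exact h
  simp only [hp1c, hp0c, map_sub, map_add, map_mul, map_one, map_pow] at hθ
  have hmem : ∀ g ∈ ({g₁, g₂, g₃} : Set (MvPolynomial (Fin 4) F)),
      Ideal.Quotient.mk I g = 0 := by
    intro g hgm
    rw [Ideal.Quotient.eq_zero_iff_mem, hIdef]
    exact Ideal.subset_span hgm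
  have hm₁ := hmem g₁ (Set.mem_insert _ _)
  have hm₂ := hmem g₂ (Set.mem_insert_of_mem _ (Set.mem_insert _ _))
  have hm₃ := hmem g₃ (Set.mem_insert_of_mem _ (Set.mem_insert_of_mem _ rfl))
  rw [h₁] at hm₁; rw [h₂] at hm₂; rw [h₃] at hm₃
  simp only [map_add, map_sub, map_mul, map_pow, map_one, map_ofNat] at hm₁ hm₂ hm₃
  have hlift : Polynomial.eval₂
      (Polynomial.eval₂RingHom ((Ideal.Quotient.mk I).comp MvPolynomial.C)
        (Ideal.Quotient.mk I (MvPolynomial.X 3)))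
      (Ideal.Quotient.mk I (MvPolynomial.X 2)) q = 0 := by
    rw [hq]
    simp only [Polynomial.eval₂_add, Polynomial.eval₂_sub, Polynomial.eval₂_mul,
      Polynomial.eval₂_pow, Polynomial.eval₂_X, Polynomial.eval₂_C, Polynomial.eval₂_one,
      Polynomial.coe_eval₂RingHom, RingHom.comp_apply, hp1c, hp0c]
    linear_combination hm₃
  refine prime_of_section _
    (MvPolynomial.eval₂Hom ((AdjoinRoot.of q).comp Polynomial.C)
      ![AdjoinRoot.of q (Polynomial.C a - Polynomial.X),
        AdjoinRoot.of q (Polynomial.C b) * AdjoinRoot.root q -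
          AdjoinRoot.of q (Polynomial.C a * Polynomial.X - Polynomial.C b),
        AdjoinRoot.root q,
        AdjoinRoot.of q Polynomial.X]) ?_
    (AdjoinRoot.lift (Polynomial.eval₂RingHom ((Ideal.Quotient.mk I).comp MvPolynomial.C)
        (Ideal.Quotient.mk I (MvPolynomial.X 3)))
      (Ideal.Quotient.mk I (MvPolynomial.X 2)) hlift) ?_
  · intro p hp
    rw [← RingHom.mem_ker]
    rw [hIdef] at hp
    refine Ideal.span_le.mpr ?_ hp
    rintro g (rfl | rfl | rfl)
    · rw [SetLike.mem_coe, RingHom.mem_ker, h₁]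
      simp only [map_add, map_sub, map_mul, map_pow, map_one, map_ofNat,
        MvPolynomial.eval₂Hom_X', MvPolynomial.eval₂Hom_C, RingHom.comp_apply,
        Matrix.cons_val_zero, Matrix.cons_val_one, Matrix.head_cons, Matrix.cons_val_two,
        Matrix.tail_cons, Matrix.cons_val_three]
      ring
    · rw [SetLike.mem_coe, RingHom.mem_ker, h₂]
      simp only [map_add, map_sub, map_mul, map_pow, map_one, map_ofNat,
        MvPolynomial.eval₂Hom_X', MvPolynomial.eval₂Hom_C, RingHom.comp_apply,
        Matrix.cons_val_zero, Matrix.cons_val_one, Matrix.head_cons, Matrix.cons_val_two,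
        Matrix.tail_cons, Matrix.cons_val_three]
      ring
    · rw [SetLike.mem_coe, RingHom.mem_ker, h₃]
      simp only [map_add, map_sub, map_mul, map_pow, map_one, map_ofNat,
        MvPolynomial.eval₂Hom_X', MvPolynomial.eval₂Hom_C, RingHom.comp_apply,
        Matrix.cons_val_zero, Matrix.cons_val_one, Matrix.head_cons, Matrix.cons_val_two,
        Matrix.tail_cons, Matrix.cons_val_three]
      linear_combination hθ
  · refine MvPolynomial.ringHom_ext (fun r => ?_) (fun i => ?_)
    · simp [AdjoinRoot.lift_of, Polynomial.coe_eval₂RingHom]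
    · have hall : ∀ j : Fin 4, j = 0 ∨ j = 1 ∨ j = 2 ∨ j = 3 := by decide
      rcases hall i with rfl | rfl | rfl | rfl <;>
        simp only [RingHom.comp_apply, MvPolynomial.eval₂Hom_X', Matrix.cons_val_zero,
          Matrix.cons_val_one, Matrix.head_cons, Matrix.cons_val_two, Matrix.tail_cons,
          Matrix.cons_val_three, map_sub, map_mul, map_ofNat, map_one,
          AdjoinRoot.lift_of, AdjoinRoot.lift_root, Polynomial.coe_eval₂RingHom,
          Polynomial.eval₂_sub, Polynomial.eval₂_mul, Polynomial.eval₂_X, Polynomial.eval₂_C,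
          Fin.isValue]
      · linear_combination -hm₁
      · linear_combination -hm₂

/-- Over a finite field of odd characteristic, with `Δ = a² − 4b` a non-square and
`Δ = −b`, the three ideals `𝔭₁, 𝔭₂, 𝔭₃` of `R = F_q[x₁₁, x₁₂, x₂₁, x₂₂]`
(variables `X 0, X 1, X 2, X 3`) are prime. -/
theorem stmt_14 {F : Type*} [Field F] [Fintype F] (hchar : ringChar F ≠ 2) (a b : F)
    (hns : ¬∃ c : F, c ^ 2 = a ^ 2 - 4 * b) (hΔ : a ^ 2 - 4 * b = -b) :
    let x : Fin 4 → MvPolynomial (Fin 4) F := MvPolynomial.X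
    let C : F → MvPolynomial (Fin 4) F := MvPolynomial.C
    let p₁ : Ideal (MvPolynomial (Fin 4) F) := Ideal.span
      {x 0 + x 3 - C a, x 1 - C b * x 2 + C a * x 3 - C b,
        x 2 ^ 2 - C (a / b) * x 2 * x 3 + x 2 + C (1 / b) * x 3 ^ 2 - C (a / b) * x 3 + 1}
    let p₂ : Ideal (MvPolynomial (Fin 4) F) := Ideal.span
      {x 0 + 2 * x 3 - C a, x 1 + C a * x 3 - C b, x 2 - C (a / b) * x 3 + 1,
        x 3 ^ 2 - C a * x 3 + C b}
    let p₃ : Ideal (MvPolynomial (Fin 4) F) := Ideal.span {x 0, x 1, x 2, x 3}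
    p₁.IsPrime ∧ p₂.IsPrime ∧ p₃.IsPrime := by
  intro x C p₁ p₂ p₃
  have hb : b ≠ 0 := fun h => hns ⟨0, by rw [hΔ, h]; ring⟩
  exact ⟨p1_prime a b hb hns hΔ _ _ _ rfl rfl rfl,
    p2_prime a b hns _ _ _ _ rfl rfl rfl rfl, p3_prime⟩
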